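/- Let p = 2^L ⊕ r with degree(r) < L. For any nonnegative integer w, degree((w ⋆ 2^L) mod p) ≤ degree(w) + degree(r), with all operations carry-less. Moreover, if degree(w) + degree(r) < L, then degree((w ⋆ 2^L) mod p) = degree(w) + degree(r) exactly. -/

import Mathlib

/-- Carry-less multiplication: `(a ⋆ b)ᵢ = ⨁ₖ a_{i-k} bₖ`. -/
def clmul : ℕ → ℕ → ℕ
  | 0, _ => 0
  | a + 1, b => (if (a + 1) % 2 = 1 then b else 0) ^^^ 2 * clmul ((a + 1) / 2) b
termination_by a _ => a
decreasing_by simp_wf; omega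

lemma clmul_zero (b : ℕ) : clmul 0 b = 0 := by rw [clmul]

lemma clmul_succ (a b : ℕ) : clmul (a+1) b
    = (if (a + 1) % 2 = 1 then b else 0) ^^^ 2 * clmul ((a + 1) / 2) b := by rw [clmul]

lemma xor_lt {x y n : ℕ} (hx : x < 2^n) (hy : y < 2^n) : x ^^^ y < 2^n :=
  Nat.xor_lt_two_pow hx hy

lemma xor_bounds {x y k : ℕ} (h1 : 2^k ≤ x) (h2 : x < 2^(k+1)) (hy : y < 2^k) :
    2^k ≤ x ^^^ y ∧ x ^^^ y < 2^(k+1) := by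
  constructor
  · by_contra h
    push_neg at h
    have : (x ^^^ y) ^^^ y < 2^k := xor_lt h hy
    rw [xor_cancel_right] at this
    omega
  · exact xor_lt h2 (hy.trans (Nat.pow_lt_pow_right one_lt_two (Nat.lt_succ_self k)))

lemma log2_eq {n k : ℕ} (h1 : 2^k ≤ n) (h2 : n < 2^(k+1)) : Nat.log2 n = k := by
  have hn : n ≠ 0 := by have := Nat.one_le_two_pow (n := k); omega
  have ha := (Nat.le_log2 hn).2 h1
  have hb := (Nat.log2_lt hn).2 h2
  omega

lemma log2_bounds {n : ℕ} (hn : n ≠ 0) : 2 ^ Nat.log2 n ≤ n ∧ n < 2 ^ (Nat.log2 n + 1) :=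
  ⟨Nat.log2_self_le hn, (Nat.log2_lt hn).1 (Nat.lt_succ_self _)⟩

lemma xor_div_two (x y : ℕ) : (x ^^^ y) / 2 = x/2 ^^^ y/2 := by
  apply Nat.eq_of_testBit_eq
  intro i
  simp [Nat.testBit_div_two, Nat.testBit_xor]

lemma xor_two_pow_mul (x y k : ℕ) (hx : x < 2^k) : x ^^^ 2^k * y = x + 2^k * y := by
  induction k generalizing x y with
  | zero => interval_cases x; simp
  | succ k ih =>
    have h1 : (x ^^^ 2^(k+1)*y) / 2 = x/2 ^^^ 2^k*y := by
      rw [xor_div_two]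
      congr 1
      have e : 2^(k+1)*y = (2^k*y)*2 := by ring
      rw [e, Nat.mul_div_cancel _ two_pos]
    have h2 : (x ^^^ 2^(k+1)*y) % 2 = (x + 2^(k+1)*y) % 2 := by
      rw [Nat.xor_mod_two_eq]
    have h3 := ih (x/2) y (by omega)
    have hp : (0:ℕ) < 2^k := Nat.pow_pos (by norm_num)
    have e1 : 2^(k+1)*y = 2*(2^k*y) := by ring
    omega

lemma xor_mul_two_pow (a b L : ℕ) : (a ^^^ b) * 2^L = a*2^L ^^^ b*2^L := by
  apply Nat.eq_of_testBit_eq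
  intro i
  rw [← Nat.shiftLeft_eq, ← Nat.shiftLeft_eq, ← Nat.shiftLeft_eq]
  simp [Nat.testBit_shiftLeft, Nat.testBit_xor, Bool.and_xor_distrib_left]

lemma clmul_xor_right (a b c : ℕ) : clmul a (b ^^^ c) = clmul a b ^^^ clmul a c := by
  induction a using Nat.strong_induction_on with
  | _ a ih =>
    match a with
    | 0 => simp [clmul_zero]
    | a + 1 =>
      rw [clmul_succ, clmul_succ, clmul_succ, ih ((a+1)/2) (by omega)]
      have h2 : ∀ x y : ℕ, 2 * (x ^^^ y) = 2*x ^^^ 2*y := by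
        intro x y
        have := xor_mul_two_pow x y 1
        simpa [Nat.mul_comm] using this
      rw [h2]
      split
      · rw [Nat.xor_assoc, Nat.xor_assoc]
        congr 1
        rw [Nat.xor_comm, Nat.xor_assoc, Nat.xor_comm (2 * clmul ((a+1)/2) c)]
      · simp

lemma clmul_two_pow (a L : ℕ) : clmul a (2^L) = a * 2^L := by
  induction a using Nat.strong_induction_on with
  | _ a ih =>
    match a with
    | 0 => simp [clmul_zero]
    | a + 1 =>
      rw [clmul_succ, ih ((a+1)/2) (by omega)]
      have e : 2*((a+1)/2 * 2^L) = 2^(L+1) * ((a+1)/2) := by ring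
      have hlt : (if (a+1) % 2 = 1 then 2^L else 0) < 2^(L+1) := by
        split
        · exact Nat.pow_lt_pow_right one_lt_two (Nat.lt_succ_self L)
        · positivity
      rw [e, xor_two_pow_mul _ _ _ hlt]
      set u := (a+1)/2 with hu
      rcases Nat.mod_two_eq_zero_or_one (a+1) with h | h
      · rw [if_neg (by omega : ¬ (a+1) % 2 = 1),
          show a+1 = 2*u from by omega]
        ring
      · rw [if_pos (by omega : (a+1) % 2 = 1),
          show a+1 = 2*u+1 from by omega]
        ring

lemma clmul_bounds (b : ℕ) (hb : b ≠ 0) : ∀ a : ℕ, a ≠ 0 →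
    2 ^ (Nat.log2 a + Nat.log2 b) ≤ clmul a b ∧
      clmul a b < 2 ^ (Nat.log2 a + Nat.log2 b + 1) := by
  intro a
  induction a using Nat.strong_induction_on with
  | _ a ih =>
    intro ha
    match a with
    | 1 =>
      have h1 : clmul 1 b = b := by rw [clmul_succ]; simp [clmul_zero]
      rw [h1]
      have : Nat.log2 1 = 0 := by rw [Nat.log2_def]; simp
      rw [this]
      simpa using log2_bounds hb
    | a + 2 =>
      obtain ⟨h1, h2⟩ := ih ((a+2)/2) (by omega) (by omega)
      have hlog : Nat.log2 (a+2) = Nat.log2 ((a+2)/2) + 1 := by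
        rw [Nat.log2_def]
        simp [show 2 ≤ a+2 from by omega]
      have hb2 := (log2_bounds hb).2
      set k := Nat.log2 ((a+2)/2) + Nat.log2 b with hk
      have hp4 : (2:ℕ)^(k+1) = 2*2^k := by ring
      have hp5 : (2:ℕ)^(k+1+1) = 4*2^k := by ring
      have g1 : 2^(k+1) ≤ 2 * clmul ((a+2)/2) b := by omega
      have g2 : 2 * clmul ((a+2)/2) b < 2^(k+1+1) := by omega
      have hy : (if (a+2) % 2 = 1 then b else 0) < 2^(k+1) := by
        split
        · exact lt_of_lt_of_le hb2 (Nat.pow_le_pow_right two_pos (by omega))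
        · positivity
      obtain ⟨j1, j2⟩ := xor_bounds g1 g2 hy
      have e : clmul (a+2) b = (if (a+2) % 2 = 1 then b else 0) ^^^ 2 * clmul ((a+2)/2) b := by
        rw [show a+2 = (a+1)+1 from rfl, clmul_succ]
      have hke : Nat.log2 (a+2) + Nat.log2 b = k + 1 := by omega
      rw [e, Nat.xor_comm, hke]
      exact ⟨j1, j2⟩

/-- For p = 2^L ⊕ r with degree(r) < L: degree((w ⋆ 2^L) mod p) ≤ degree w + degree r,
with equality when degree w + degree r < L (w nonzero). -/
theorem stmt13 (cldiv clmod : ℕ → ℕ → ℕ)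
    (hchar : ∀ a b : ℕ, b ≠ 0 →
      a = clmul (cldiv a b) b ^^^ clmod a b ∧ clmod a b < 2 ^ Nat.log2 b)
    (L : ℕ) (r : ℕ) (hr : r ≠ 0) (hrL : Nat.log2 r < L) :
    (∀ w : ℕ, Nat.log2 (clmod (clmul w (2 ^ L)) (2 ^ L ^^^ r)) ≤ Nat.log2 w + Nat.log2 r) ∧
    (∀ w : ℕ, w ≠ 0 → Nat.log2 w + Nat.log2 r < L →
      Nat.log2 (clmod (clmul w (2 ^ L)) (2 ^ L ^^^ r)) = Nat.log2 w + Nat.log2 r) := by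
  have hr2 : r < 2^L := (Nat.log2_lt hr).1 hrL
  have hLlt : (2:ℕ)^L < 2^(L+1) := Nat.pow_lt_pow_right one_lt_two (Nat.lt_succ_self L)
  obtain ⟨hpp1, hpp2⟩ := xor_bounds (le_refl ((2:ℕ)^L)) hLlt hr2
  have hLpos : (0:ℕ) < 2^L := Nat.pow_pos (by norm_num)
  have hp0 : 2^L ^^^ r ≠ 0 := by omega
  have hlogp : Nat.log2 (2^L ^^^ r) = L := log2_eq hpp1 hpp2
  have key : ∀ w : ℕ, w ≠ 0 →
      (Nat.log2 (clmod (clmul w (2^L)) (2^L ^^^ r)) ≤ Nat.log2 w + Nat.log2 r ∧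
       (Nat.log2 w + Nat.log2 r < L →
         Nat.log2 (clmod (clmul w (2^L)) (2^L ^^^ r)) = Nat.log2 w + Nat.log2 r)) := by
    intro w hw
    obtain ⟨heq, hmlt⟩ := hchar (clmul w (2^L)) (2^L ^^^ r) hp0
    rw [hlogp] at hmlt
    set q := cldiv (clmul w (2^L)) (2^L ^^^ r) with hq
    set m := clmod (clmul w (2^L)) (2^L ^^^ r) with hm
    rw [clmul_two_pow] at heq
    obtain ⟨hw1, hw2⟩ := log2_bounds hw
    have hq0 : q ≠ 0 := by
      intro h
      rw [h, clmul_zero, Nat.zero_xor] at heq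
      have : 1 * 2^L ≤ w * 2^L := Nat.mul_le_mul_right _ (by omega)
      omega
    obtain ⟨hq1, hq2⟩ := log2_bounds hq0
    obtain ⟨hc1, hc2⟩ := clmul_bounds (2^L ^^^ r) hp0 q hq0
    rw [hlogp] at hc1 hc2
    have hql : Nat.log2 q = Nat.log2 w := by
      have hmlt' : m < 2 ^ (Nat.log2 q + L) :=
        lt_of_lt_of_le hmlt (Nat.pow_le_pow_right two_pos (by omega))
      obtain ⟨hx1, hx2⟩ := xor_bounds hc1 hc2 hmlt'
      have hb1 : 2^(Nat.log2 w + L) ≤ w*2^L := by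
        rw [pow_add]; exact Nat.mul_le_mul_right _ hw1
      have hb2 : w*2^L < 2^(Nat.log2 w + L + 1) := by
        calc w*2^L < 2^(Nat.log2 w + 1) * 2^L := Nat.mul_lt_mul_of_lt_of_le hw2 (le_refl _) hLpos
        _ = 2^(Nat.log2 w + L + 1) := by rw [← pow_add]; ring_nf
      have e1 := log2_eq hb1 hb2
      have e2 := log2_eq (heq ▸ hx1) (heq ▸ hx2)
      omega
    have hsplit : clmul q (2^L ^^^ r) = q*2^L ^^^ clmul q r := by
      rw [clmul_xor_right, clmul_two_pow]
    have heq2 : (w ^^^ q) * 2^L = clmul q r ^^^ m := by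
      rw [xor_mul_two_pow]
      rw [hsplit] at heq
      rw [heq, Nat.xor_comm _ (q * 2^L), ← Nat.xor_assoc, ← Nat.xor_assoc,
        Nat.xor_self, Nat.zero_xor]
    obtain ⟨hcc1, hcc2⟩ := clmul_bounds r hr q hq0
    rw [hql] at hcc1 hcc2
    by_cases hu : w ^^^ q = 0
    · rw [hu, Nat.zero_mul] at heq2
      have hcm : clmul q r = m := xor_eq_zero_iff.1 heq2.symm
      have hlm : Nat.log2 m = Nat.log2 w + Nat.log2 r :=
        log2_eq (hcm ▸ hcc1) (hcm ▸ hcc2)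
      exact ⟨le_of_eq hlm, fun _ => hlm⟩
    · have hu1 : 2^L ≤ (w ^^^ q) * 2^L := by
        have : 1 * 2^L ≤ (w ^^^ q) * 2^L := Nat.mul_le_mul_right _ (by omega)
        omega
      constructor
      · by_cases hm0 : m = 0
        · simp [hm0, Nat.log2_zero]
        · by_contra hcon
          push_neg at hcon
          have hcl : clmul q r < 2 ^ Nat.log2 m :=
            lt_of_lt_of_le hcc2 (Nat.pow_le_pow_right two_pos (by omega))
          obtain ⟨hmb1, hmb2⟩ := log2_bounds hm0
          obtain ⟨_, hxx2⟩ := xor_bounds hmb1 hmb2 hcl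
          rw [Nat.xor_comm m (clmul q r)] at hxx2
          have hmL : Nat.log2 m < L := (Nat.log2_lt hm0).2 hmlt
          have : (2:ℕ)^(Nat.log2 m + 1) ≤ 2^L := Nat.pow_le_pow_right two_pos (by omega)
          omega
      · intro hL
        exfalso
        have h1 : clmul q r < 2^L :=
          lt_of_lt_of_le hcc2 (Nat.pow_le_pow_right two_pos (by omega))
        have h2 : clmul q r ^^^ m < 2^L := xor_lt h1 hmlt
        omega
  constructor
  · intro w
    by_cases hw : w = 0
    · subst hw
      rw [clmul_zero]
      obtain ⟨heq, hmlt⟩ := hchar 0 (2^L ^^^ r) hp0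
      rw [hlogp] at hmlt
      set q := cldiv 0 (2^L ^^^ r) with hq
      set m := clmod 0 (2^L ^^^ r) with hm
      have hcm : clmul q (2^L ^^^ r) = m := xor_eq_zero_iff.1 heq.symm
      have hq0 : q = 0 := by
        by_contra hq0
        obtain ⟨hc1, _⟩ := clmul_bounds (2^L ^^^ r) hp0 q hq0
        rw [hlogp] at hc1
        have : (2:ℕ)^L ≤ 2^(Nat.log2 q + L) := Nat.pow_le_pow_right two_pos (by omega)
        omega
      rw [hq0, clmul_zero] at hcm
      rw [← hcm, Nat.log2_zero]
      exact Nat.zero_le _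
    · exact (key w hw).1
  · intro w hw hWL
    exact (key w hw).2 hWL
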